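/- arXiv:1605.00786 — 3 statements merged into one kernel-verified Lean document; each statement's English description precedes it below -/
import Mathlib

section
/- For integers N ≥ 1, M > N, and d ≥ 2, the strict inequality (M - N + N(M+d)) / (M(N+d)) > (N+1)/(N+d) holds. -/
theorem uqcm_gt_estimation (N M d : ℤ) (hN : 1 ≤ N) (hNM : N < M) (hd : 2 ≤ d) :
    ((M : ℝ) - N + N * (M + d)) / (M * (N + d)) > ((N : ℝ) + 1) / (N + d) := by
  have hN' : (1 : ℝ) ≤ N := by exact_mod_cast hN
  have hNM' : (N : ℝ) < M := by exact_mod_cast hNM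
  have hd' : (2 : ℝ) ≤ d := by exact_mod_cast hd
  have h1 : (0 : ℝ) < N + d := by linarith
  have h2 : (0 : ℝ) < M * (N + d) := by nlinarith
  rw [gt_iff_lt, div_lt_div_iff₀ h1 h2]
  nlinarith [mul_pos h1 (show (0:ℝ) < N*(d-1) by nlinarith)]
end

section
/- For every integer d ≥ 2, the inequality 1/d + (1/(4d))·(d - 2 + sqrt(d² + 4d - 4)) > (d+3)/(2(d+1)) holds. -/
theorem pqcm_gt_uqcm (d : ℤ) (hd : 2 ≤ d) :
    1 / (d : ℝ) + (1 / (4 * d)) * (d - 2 + Real.sqrt (d ^ 2 + 4 * d - 4)) >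
      ((d : ℝ) + 3) / (2 * (d + 1)) := by
  have hd' : (2:ℝ) ≤ (d:ℝ) := by exact_mod_cast hd
  have hdpos : (0:ℝ) < d := by linarith
  have h1 : (0:ℝ) < (d:ℝ) + 1 := by linarith
  have hnum : (0:ℝ) ≤ (d:ℝ)^2 + 3*d - 2 := by nlinarith
  have hs : ((d:ℝ)^2 + 3*d - 2)/(d+1) < Real.sqrt ((d:ℝ) ^ 2 + 4 * d - 4) := by
    rw [Real.lt_sqrt (by positivity)]
    · rw [div_pow, div_lt_iff₀ (by positivity)]
      nlinarith
  have hs' : ((d:ℝ)^2 + 3*d - 2) < (d+1) * Real.sqrt ((d:ℝ)^2 + 4*d - 4) := by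
    rw [div_lt_iff₀ h1] at hs
    linarith [hs]
  have hsnn : (0:ℝ) ≤ Real.sqrt ((d:ℝ)^2 + 4*d - 4) := Real.sqrt_nonneg _
  rw [gt_iff_lt, div_lt_iff₀ (by positivity : (0:ℝ) < 2*((d:ℝ)+1))]
  have h4d : (0:ℝ) < 4*d := by linarith
  field_simp
  rw [show (d:ℝ)*(d+4)-4 = (d:ℝ)^2+4*d-4 by ring]
  nlinarith [hs', hsnn, mul_pos hdpos hdpos]
end

section
/- For integers 0 ≤ n < N and p ∈ [0,1], the tail probability P(X > n) of a binomial random variable X with parameters N and p satisfies P(X > n) = I_p(n+1, N-n), where I_x(a,b) is the regularized incomplete beta function. -/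
open Finset

private lemma term_deriv (N n k : ℕ) (hn : n < N) (hk : k ∈ Finset.Icc (n+1) N) (p : ℝ) :
    HasDerivAt (fun p : ℝ => (N.choose k : ℝ) * p ^ k * (1 - p) ^ (N - k))
      ((N:ℝ) * (((N-1).choose (k-1) : ℝ) * p ^ (k-1) * (1-p) ^ (N-k)
        - ((N-1).choose k : ℝ) * p ^ k * (1-p) ^ (N-1-k))) p := by
  simp only [Finset.mem_Icc] at hk
  have h1 : HasDerivAt (fun p : ℝ => (N.choose k : ℝ) * p ^ k)
      ((N.choose k : ℝ) * ((k:ℝ) * p ^ (k-1))) p := (hasDerivAt_pow k p).const_mul _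
  have h2 : HasDerivAt (fun p : ℝ => (1 - p) ^ (N - k))
      (((N - k : ℕ):ℝ) * (1-p) ^ (N-k-1) * (-1)) p :=
    ((hasDerivAt_id p).const_sub 1).pow (N-k)
  have h := h1.mul h2
  convert h using 1
  case e'_4 => rfl
  case e'_5 => rfl
  case e'_8 => rfl
  have e1 : (N:ℝ) * ((N-1).choose (k-1)) = (N.choose k) * k := by
    have h' := Nat.add_one_mul_choose_eq (N-1) (k-1)
    rw [show N - 1 + 1 = N by omega, show k - 1 + 1 = k by omega] at h'
    exact_mod_cast h'
  have e2 : ((N.choose k):ℝ) * ((N-k:ℕ):ℝ) = ((N-1).choose k) * N := by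
    have h' := Nat.choose_mul_succ_eq (N-1) k
    rw [show N - 1 + 1 = N by omega] at h'
    exact_mod_cast h'.symm
  rw [show N - k - 1 = N - 1 - k by omega] at h ⊢
  linear_combination (p^(k-1)*(1-p)^(N-k)) * e1 + (p^k*(1-p)^(N-1-k)) * e2

private lemma sum_deriv (N n : ℕ) (hn : n < N) (p : ℝ) :
    HasDerivAt (fun p : ℝ => ∑ k ∈ Finset.Icc (n + 1) N,
      (N.choose k : ℝ) * p ^ k * (1 - p) ^ (N - k))
      ((N : ℝ) * ((N-1).choose n) * (p ^ n * (1 - p) ^ (N - n - 1))) p := by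
  have h := HasDerivAt.fun_sum (fun k hk => term_deriv N n k hn hk p)
  convert h using 1
  case e'_4 => rfl
  case e'_5 => rfl
  set a : ℕ → ℝ := fun j => ((N-1).choose j : ℝ) * p ^ j * (1-p) ^ (N-1-j) with ha
  have step : ∀ k ∈ Finset.Icc (n+1) N,
      (N:ℝ) * (((N-1).choose (k-1) : ℝ) * p ^ (k-1) * (1-p) ^ (N-k)
        - ((N-1).choose k : ℝ) * p ^ k * (1-p) ^ (N-1-k))
      = (N:ℝ) * (a (k-1) - a k) := by
    intro k hk
    simp only [Finset.mem_Icc] at hk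
    simp only [ha]
    rw [show N - 1 - (k-1) = N - k by omega]
  rw [Finset.sum_congr rfl step, ← Finset.mul_sum]
  have tele : ∑ k ∈ Finset.Icc (n+1) N, (a (k-1) - a k) = a n - a N := by
    rw [← Finset.Ico_add_one_right_eq_Icc, Finset.sum_Ico_eq_sum_range]
    have h2 : ∀ i, a (n+1+i-1) - a (n+1+i) = a (n+i) - a (n+(i+1)) := by
      intro i; congr 2 <;> omega
    simp only [h2]
    rw [Finset.sum_range_sub' (fun i => a (n+i))]
    rw [show n + 0 = n from rfl, show n + (N + 1 - (n+1)) = N by omega]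
  have haN : a N = 0 := by
    simp [ha, Nat.choose_eq_zero_of_lt (by omega : N - 1 < N)]
  have han : a n = ((N-1).choose n : ℝ) * p ^ n * (1-p) ^ (N-n-1) := by
    simp only [ha]
    rw [show N - 1 - n = N - n - 1 by omega]
  rw [tele, haN, han]
  ring

theorem binomial_tail_eq_regIncompleteBeta (N n : ℕ) (hn : n < N) (p : ℝ)
    (hp : p ∈ Set.Icc (0 : ℝ) 1) :
    (∑ k ∈ Finset.Icc (n + 1) N, (N.choose k : ℝ) * p ^ k * (1 - p) ^ (N - k)) =
      (∫ t in (0 : ℝ)..p, t ^ n * (1 - t) ^ (N - n - 1)) /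
        (∫ t in (0 : ℝ)..1, t ^ n * (1 - t) ^ (N - n - 1)) := by
  set f : ℝ → ℝ := fun p => ∑ k ∈ Finset.Icc (n + 1) N,
      (N.choose k : ℝ) * p ^ k * (1 - p) ^ (N - k) with hf
  set c : ℝ := (N : ℝ) * ((N-1).choose n) with hc
  have hcpos : 0 < c := by
    apply mul_pos
    · exact_mod_cast (show 0 < N by omega)
    · exact_mod_cast Nat.choose_pos (by omega : n ≤ N - 1)
  have hint : ∀ q : ℝ, (∫ t in (0:ℝ)..q, t ^ n * (1 - t) ^ (N - n - 1)) = f q / c := by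
    intro q
    have key : (∫ t in (0:ℝ)..q, c * (t ^ n * (1 - t) ^ (N - n - 1))) = f q - f 0 := by
      apply intervalIntegral.integral_eq_sub_of_hasDerivAt
      · intro t _
        exact sum_deriv N n hn t
      · apply Continuous.intervalIntegrable
        fun_prop
    rw [intervalIntegral.integral_const_mul] at key
    have hf0 : f 0 = 0 := by
      simp only [hf]
      apply Finset.sum_eq_zero
      intro k hk
      simp only [Finset.mem_Icc] at hk
      rw [zero_pow (by omega : k ≠ 0)]
      ring
    rw [hf0, sub_zero] at key
    field_simp
    linarith [key]
  have hf1 : f 1 = 1 := by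
    simp only [hf]
    rw [Finset.sum_eq_single N]
    · simp
    · intro k hk hkN
      simp only [Finset.mem_Icc] at hk
      rw [sub_self, zero_pow (by omega : N - k ≠ 0)]
      ring
    · intro h
      exact absurd (Finset.mem_Icc.mpr ⟨by omega, le_refl N⟩) h
  rw [hint p, hint 1, hf1]
  field_simp
  rfl
end
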